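/- Theorem 3 (residual compensation dominates direct truncation, explicit form): Let W be a real n×n matrix and S an invertible real n×n matrix. Suppose WS = U Σ Vᵀ is a singular value decomposition (U, V orthogonal n×n, Σ with Σᵢⱼ = σᵢ if i = j and 0 otherwise, σ₀ ≥ σ₁ ≥ … ≥ 0). For natural numbers r_i ≤ r ≤ n, define W_{r_i} = U Σ_{r_i} Vᵀ S⁻¹ (intermediate approximation) and W_r = U Σ_r Vᵀ S⁻¹ (direct truncation), where Σ_k keeps the diagonal entries σᵢ with i < k and zeroes the rest. Set r_r = r − r_i, let R = W − W_{r_i}, and let R_{r_r} be a best rank-r_r approximation of R in Frobenius norm. Then the residual-compensated matrix Ŵ_r = W_{r_i} + R_{r_r} satisfies ‖W − Ŵ_r‖_F² ≤ ‖W − W_r‖_F². -/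

import Mathlib

open Matrix

/-- The Frobenius norm of a real matrix: `sqrt (∑ i j, (M i j)^2)`. -/
noncomputable def frobNorm {n m : ℕ} (M : Matrix (Fin n) (Fin m) ℝ) : ℝ :=
  Real.sqrt (∑ i, ∑ j, (M i j) ^ 2)

/-- **Theorem 3, explicit form** (residual compensation dominates direct
truncation): given an SVD `WS = U Σ Vᵀ`, the intermediate approximation
`W_{r_i} = U Σ_{r_i} Vᵀ S⁻¹`, the direct truncation `W_r = U Σ_r Vᵀ S⁻¹`, and a
best rank-`(r − r_i)` Frobenius approximation `R_{r_r}` of the residual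
`R = W − W_{r_i}`, the residual-compensated matrix `Ŵ_r = W_{r_i} + R_{r_r}`
satisfies `‖W − Ŵ_r‖_F² ≤ ‖W − W_r‖_F²`. -/
theorem erc_svd_dominates_direct_truncation {n : ℕ}
    (W S Sig U V : Matrix (Fin n) (Fin n) ℝ)
    (hS : IsUnit S.det)
    (σ : ℕ → ℝ)
    (hU : Uᵀ * U = 1) (hU' : U * Uᵀ = 1)
    (hV : Vᵀ * V = 1) (hV' : V * Vᵀ = 1)
    (hSig : ∀ (i j : Fin n), Sig i j = if (i : ℕ) = (j : ℕ) then σ (i : ℕ) else 0)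
    (hmono : ∀ i : ℕ, i + 1 < n → σ (i + 1) ≤ σ i)
    (hnonneg : ∀ i : ℕ, i < n → 0 ≤ σ i)
    (hWS : W * S = U * Sig * Vᵀ)
    (ri r : ℕ) (hri : ri ≤ r) (hr : r ≤ n)
    (Wri Wr : Matrix (Fin n) (Fin n) ℝ)
    (hWri : Wri = U * (Matrix.of fun (i j : Fin n) =>
      if (i : ℕ) = (j : ℕ) ∧ (i : ℕ) < ri then σ (i : ℕ) else 0) * Vᵀ * S⁻¹)
    (hWr : Wr = U * (Matrix.of fun (i j : Fin n) =>
      if (i : ℕ) = (j : ℕ) ∧ (i : ℕ) < r then σ (i : ℕ) else 0) * Vᵀ * S⁻¹)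
    (Rrr : Matrix (Fin n) (Fin n) ℝ)
    (hRrank : Rrr.rank ≤ r - ri)
    (hRbest : ∀ X : Matrix (Fin n) (Fin n) ℝ, X.rank ≤ r - ri →
      frobNorm ((W - Wri) - Rrr) ≤ frobNorm ((W - Wri) - X)) :
    frobNorm (W - (Wri + Rrr)) ^ 2 ≤ frobNorm (W - Wr) ^ 2 := by

  -- Let `X = Wr - Wri`; we show it has rank ≤ r - ri.
  set X : Matrix (Fin n) (Fin n) ℝ := Wr - Wri with hX
  -- the diagonal "band" matrix
  set M : Matrix (Fin n) (Fin n) ℝ := Matrix.of fun (i j : Fin n) =>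
      if (i : ℕ) = (j : ℕ) ∧ ri ≤ (i : ℕ) ∧ (i : ℕ) < r then σ (i : ℕ) else 0 with hM
  have hXeq : X = U * M * Vᵀ * S⁻¹ := by
    rw [hX, hWr, hWri]
    have : (Matrix.of fun (i j : Fin n) =>
        if (i : ℕ) = (j : ℕ) ∧ (i : ℕ) < r then σ (i : ℕ) else 0)
        - (Matrix.of fun (i j : Fin n) =>
        if (i : ℕ) = (j : ℕ) ∧ (i : ℕ) < ri then σ (i : ℕ) else 0) = M := by
      ext i j
      simp only [Matrix.sub_apply, Matrix.of_apply, hM]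
      split_ifs <;> first | omega | ring1
    rw [← this]
    simp only [Matrix.sub_mul, Matrix.mul_sub]
  -- factor M through Fin (r - ri)
  have hrank : X.rank ≤ r - ri := by
    set B : Matrix (Fin n) (Fin (r - ri)) ℝ := fun i k =>
      if (i : ℕ) = ri + (k : ℕ) then σ (i : ℕ) else 0 with hB
    set C : Matrix (Fin (r - ri)) (Fin n) ℝ := fun k j =>
      if (j : ℕ) = ri + (k : ℕ) then 1 else 0 with hC
    have hMBC : M = B * C := by
      ext i j
      simp only [hM, Matrix.of_apply, Matrix.mul_apply]
      simp only [hB, hC]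
      rcases Nat.lt_or_ge (i : ℕ) r with h2 | h2
      · rcases Nat.lt_or_ge (i : ℕ) ri with h1 | h1
        · rw [Finset.sum_eq_zero]
          · have : ¬((i : ℕ) = (j : ℕ) ∧ ri ≤ (i : ℕ) ∧ (i : ℕ) < r) := by omega
            simp [this]
          · intro k _
            have : (i : ℕ) ≠ ri + (k : ℕ) := by omega
            simp [this]
        · have hk : (i : ℕ) - ri < r - ri := by omega
          rw [Finset.sum_eq_single (⟨(i : ℕ) - ri, hk⟩ : Fin (r - ri))]
          · have hi : (i : ℕ) = ri + ((i : ℕ) - ri) := by omega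
            rcases eq_or_ne (i : ℕ) (j : ℕ) with hij | hij
            · simp [← hij, ← hi, h1, h2]
            · have hj : (j : ℕ) ≠ ri + ((i : ℕ) - ri) := by omega
              simp [← hi, hj, hij, Ne.symm hij]
          · intro k _ hk'
            rcases eq_or_ne (i : ℕ) (ri + (k : ℕ)) with h | h
            · have : (j : ℕ) ≠ ri + (k : ℕ) := by
                intro hj
                apply hk'
                apply Fin.ext
                simp only
                omega
              simp [this]
            · simp [h]
          · simp
      · rw [Finset.sum_eq_zero]
        · have : ¬((i : ℕ) = (j : ℕ) ∧ ri ≤ (i : ℕ) ∧ (i : ℕ) < r) := by omega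
          simp [this]
        · intro k _
          have : (i : ℕ) ≠ ri + (k : ℕ) := by omega
          simp [this]
    calc X.rank ≤ (U * M * Vᵀ).rank := by rw [hXeq]; exact Matrix.rank_mul_le_left _ _
      _ ≤ (U * M).rank := Matrix.rank_mul_le_left _ _
      _ ≤ M.rank := Matrix.rank_mul_le_right _ _
      _ = (B * C).rank := by rw [hMBC]
      _ ≤ C.rank := Matrix.rank_mul_le_right _ _
      _ ≤ r - ri := Matrix.rank_le_height C
  have key := hRbest X hrank
  have h1 : W - (Wri + Rrr) = (W - Wri) - Rrr := by abel
  have h2 : (W - Wri) - X = W - Wr := by rw [hX]; abel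
  rw [h1, ← h2]
  have h0 : 0 ≤ frobNorm (W - Wri - Rrr) := Real.sqrt_nonneg _
  exact pow_le_pow_left₀ h0 key 2
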